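/- With $H$ and $\rho=H'/H$ as above, the function $r\mapsto \rho(r)/r$ is strictly decreasing on $(0,\infty)$; equivalently, $r\mapsto H''(r)/H(r)$ is strictly increasing, and consequently $0<\rho'(r)<\rho(r)/r$ for all $r>0$. -/

import Mathlib

open intervalIntegral Real MeasureTheory Set Function



lemma my_integral_pos {f : ℝ → ℝ} {a b z : ℝ} (hf : Continuous f)
    (hab : a < b) (h0 : ∀ x ∈ Set.Icc a b, 0 ≤ f x) (hz : z ∈ Set.Ioo a b) (hfz : 0 < f z) :
    0 < ∫ x in a..b, f x := by
  have hfi : IntervalIntegrable f volume a b := hf.intervalIntegrable a b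
  have hae : 0 ≤ᵐ[volume.restrict (Set.uIoc a b)] f := by
    rw [Set.uIoc_of_le hab.le]
    exact (MeasureTheory.ae_restrict_iff' measurableSet_Ioc).2
      (Filter.Eventually.of_forall fun x hx => h0 x ⟨hx.1.le, hx.2⟩)
  rw [intervalIntegral.integral_pos_iff_support_of_nonneg_ae' hae hfi]
  refine ⟨hab, ?_⟩
  obtain ⟨ε, hε, hball⟩ : ∃ ε > 0, ∀ x ∈ Metric.ball z ε, 0 < f x := by
    have : IsOpen {x | 0 < f x} := isOpen_lt continuous_const hf
    obtain ⟨ε, hε, h⟩ := Metric.isOpen_iff.1 this z hfz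
    exact ⟨ε, hε, fun x hx => h hx⟩
  have hsub : Set.Ioc (max a (z - ε)) z ⊆ Function.support f ∩ Set.Ioc a b := by
    intro x hx
    have hx1 : a < x := lt_of_le_of_lt (le_max_left _ _) hx.1
    have hx2 : z - ε < x := lt_of_le_of_lt (le_max_right _ _) hx.1
    have hxz : x ≤ z := hx.2
    have : x ∈ Metric.ball z ε := by
      rw [Metric.mem_ball, Real.dist_eq, abs_lt]
      constructor <;> linarith
    exact ⟨(hball x this).ne', hx1, hxz.trans hz.2.le⟩
  refine lt_of_lt_of_le ?_ (measure_mono hsub)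
  rw [Real.volume_Ioc]
  apply ENNReal.ofReal_pos.2
  have h1 : max a (z - ε) < z := max_lt hz.1 (by linarith)
  linarith


noncomputable def SA (n : ℕ) (g : ℝ → ℝ) (r : ℝ) : ℝ :=
  ∫ x in (0:ℝ)..π, g x * Real.exp (-(r * Real.cos x)) * Real.sin x ^ (n - 1)

lemma SA_integrand_cont (n : ℕ) {g : ℝ → ℝ} (hg : Continuous g) (r : ℝ) :
    Continuous fun x => g x * Real.exp (-(r * Real.cos x)) * Real.sin x ^ (n - 1) := by
  fun_prop

lemma SA_congr {n : ℕ} {g h : ℝ → ℝ} (hgh : ∀ x, g x = h x) (r : ℝ) : SA n g r = SA n h r := by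
  unfold SA
  apply intervalIntegral.integral_congr
  intro x _
  simp only [hgh x]

lemma SA_add {n : ℕ} {g h : ℝ → ℝ} (hg : Continuous g) (hh : Continuous h) (r : ℝ) :
    SA n (fun x => g x + h x) r = SA n g r + SA n h r := by
  unfold SA
  rw [← intervalIntegral.integral_add ((SA_integrand_cont n hg r).intervalIntegrable 0 π)
    ((SA_integrand_cont n hh r).intervalIntegrable 0 π)]
  apply intervalIntegral.integral_congr
  intro x _
  ring

lemma SA_const_mul {n : ℕ} (k : ℝ) (g : ℝ → ℝ) (r : ℝ) :
    SA n (fun x => k * g x) r = k * SA n g r := by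
  unfold SA
  rw [← intervalIntegral.integral_const_mul]
  apply intervalIntegral.integral_congr
  intro x _
  ring

lemma SA_pos {n : ℕ} {g : ℝ → ℝ} (hg : Continuous g) (h0 : ∀ x ∈ Set.Icc 0 π, 0 ≤ g x)
    {z : ℝ} (hz : z ∈ Set.Ioo 0 π) (hgz : 0 < g z) (r : ℝ) :
    0 < SA n g r := by
  apply my_integral_pos (SA_integrand_cont n hg r) Real.pi_pos
  · intro x hx
    have h1 : 0 ≤ Real.sin x := Real.sin_nonneg_of_nonneg_of_le_pi hx.1 hx.2
    have h2 : (0:ℝ) < Real.exp (-(r * Real.cos x)) := Real.exp_pos _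
    have := h0 x hx
    positivity
  · exact hz
  · have h1 : 0 < Real.sin z := Real.sin_pos_of_pos_of_lt_pi hz.1 hz.2
    have h2 : (0:ℝ) < Real.exp (-(r * Real.cos z)) := Real.exp_pos _
    positivity

lemma SA_one_pos (n : ℕ) (r : ℝ) : 0 < SA n (fun _ => 1) r :=
  SA_pos continuous_const (fun _ _ => zero_le_one)
    ⟨Real.pi_div_two_pos, half_lt_self Real.pi_pos⟩ one_pos r

lemma SA_sinsq_pos (n : ℕ) (r : ℝ) : 0 < SA n (fun x => 1 - Real.cos x ^ 2) r := by
  refine SA_pos (by fun_prop) (fun x _ => ?_) ⟨Real.pi_div_two_pos, half_lt_self Real.pi_pos⟩ ?_ r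
  · nlinarith [Real.neg_one_le_cos x, Real.cos_le_one x]
  · rw [Real.cos_pi_div_two]; norm_num

lemma SA_sq_pos (n : ℕ) (m : ℝ) (r : ℝ) :
    0 < SA n (fun x => (Real.cos x + m) ^ 2) r := by
  rcases eq_or_ne m (-(1/2)) with hm | hm
  · refine SA_pos (by fun_prop) (fun x _ => sq_nonneg _) (z := π - π/3)
      ⟨by linarith [Real.pi_pos], by linarith [Real.pi_div_two_pos, Real.pi_gt_three]⟩ ?_ r
    rw [Real.cos_pi_sub, Real.cos_pi_div_three, hm]
    norm_num
  · refine SA_pos (by fun_prop) (fun x _ => sq_nonneg _) (z := π/3)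
      ⟨by positivity, by linarith [Real.pi_pos]⟩ ?_ r
    rw [Real.cos_pi_div_three]
    have : (1:ℝ)/2 + m ≠ 0 := fun h => hm (by linarith)
    positivity

lemma SA_var_pos (n : ℕ) (r : ℝ) :
    0 < SA n (fun x => Real.cos x ^ 2) r * SA n (fun _ => 1) r - (SA n Real.cos r) ^ 2 := by
  set a := SA n (fun _ => 1) r with ha
  have hapos := SA_one_pos n r
  set m := -(SA n Real.cos r) / a with hm
  have key : SA n (fun x => (Real.cos x + m) ^ 2) r =
      SA n (fun x => Real.cos x ^ 2) r + (2 * m) * SA n Real.cos r + m ^ 2 * a := by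
    rw [ha]
    rw [← SA_const_mul (2*m) Real.cos r, ← SA_const_mul (m^2) (fun _ => 1) r]
    rw [← SA_add (by fun_prop) (by fun_prop) r, ← SA_add (by fun_prop) (by fun_prop) r]
    apply SA_congr
    intro x
    ring
  have hq := SA_sq_pos n m r
  rw [key] at hq
  have hm' : m * a = -(SA n Real.cos r) := by
    rw [hm]; exact div_mul_cancel₀ _ (show a ≠ 0 from hapos.ne')
  nlinarith [hq, hapos]

lemma SA_ibp {n : ℕ} (hn : 1 ≤ n) (r : ℝ) :
    (n : ℝ) * SA n Real.cos r = -(r * SA n (fun x => 1 - Real.cos x ^ 2) r) := by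
  have hu : ∀ x ∈ Set.uIcc (0:ℝ) π, HasDerivAt (fun x => Real.exp (-(r * Real.cos x)))
      (r * Real.sin x * Real.exp (-(r * Real.cos x))) x := by
    intro x _
    have h0 : HasDerivAt (fun x : ℝ => -(r * Real.cos x)) (r * Real.sin x) x := by
      have := (Real.hasDerivAt_cos x).const_mul r
      have := this.neg
      exact this.congr_deriv (by ring)
    have := h0.exp
    convert this using 1
    ring
  have hv : ∀ x ∈ Set.uIcc (0:ℝ) π, HasDerivAt (fun x => Real.sin x ^ n)
      ((n : ℝ) * Real.sin x ^ (n - 1) * Real.cos x) x := by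
    intro x _
    exact (Real.hasDerivAt_sin x).pow n
  have h1 := intervalIntegral.integral_mul_deriv_eq_deriv_mul hu hv
    ((by fun_prop : Continuous fun x => r * Real.sin x * Real.exp (-(r * Real.cos x))).intervalIntegrable 0 π)
    ((by fun_prop : Continuous fun x => (n : ℝ) * Real.sin x ^ (n - 1) * Real.cos x).intervalIntegrable 0 π)
  rw [Real.sin_pi, Real.sin_zero] at h1
  rw [zero_pow (by omega : n ≠ 0)] at h1
  simp only [mul_zero, zero_sub, sub_zero] at h1
  -- h1 : ∫ exp(-(r cos x)) * (n sin^{n-1} cos) = 0 - 0 - ∫ (r sin exp) * sin^n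
  have h2 : (∫ x in (0:ℝ)..π, Real.exp (-(r * Real.cos x)) * ((n:ℝ) * Real.sin x ^ (n-1) * Real.cos x))
      = (n : ℝ) * SA n Real.cos r := by
    unfold SA
    rw [← intervalIntegral.integral_const_mul]
    apply intervalIntegral.integral_congr
    intro x _
    ring
  have h3 : (∫ x in (0:ℝ)..π, r * Real.sin x * Real.exp (-(r * Real.cos x)) * Real.sin x ^ n)
      = r * SA n (fun x => 1 - Real.cos x ^ 2) r := by
    unfold SA
    rw [← intervalIntegral.integral_const_mul]
    apply intervalIntegral.integral_congr
    intro x _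
    simp only []
    have hsin : Real.sin x ^ (n - 1) * Real.sin x ^ 2 = Real.sin x ^ (n + 1) := by
      rw [← pow_add]
      congr 1
      omega
    have hpyth : Real.sin x ^ 2 = 1 - Real.cos x ^ 2 := by
      have := Real.sin_sq_add_cos_sq x
      linarith
    calc r * Real.sin x * Real.exp (-(r * Real.cos x)) * Real.sin x ^ n
        = r * ((Real.sin x ^ (n-1) * Real.sin x ^ 2) * Real.exp (-(r * Real.cos x))) := by
          rw [hsin]
          rw [show n + 1 = n + 1 from rfl]
          rw [show Real.sin x ^ (n+1) = Real.sin x ^ n * Real.sin x from pow_succ _ _]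
          ring
      _ = r * ((1 - Real.cos x ^ 2) * Real.exp (-(r * Real.cos x)) * Real.sin x ^ (n - 1)) := by
          rw [hpyth]; ring
  rw [h2, h3] at h1
  linarith [h1]
lemma SA_deriv (n : ℕ) {g : ℝ → ℝ} (hg : Continuous g) (hg1 : ∀ x, |g x| ≤ 1) (r : ℝ) :
    HasDerivAt (SA n g) (-SA n (fun x => Real.cos x * g x) r) r := by
  have key := intervalIntegral.hasDerivAt_integral_of_dominated_loc_of_deriv_le
    (F := fun s x => g x * Real.exp (-(s * Real.cos x)) * Real.sin x ^ (n - 1))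
    (F' := fun s x => -(Real.cos x) * (g x * Real.exp (-(s * Real.cos x)) * Real.sin x ^ (n - 1)))
    (x₀ := r) (a := 0) (b := π) (μ := volume) (bound := fun _ => Real.exp (|r| + 1))
    (s := Metric.ball r 1) (Metric.ball_mem_nhds r one_pos)
    (Filter.Eventually.of_forall fun s => ((SA_integrand_cont n hg s).aestronglyMeasurable))
    ((SA_integrand_cont n hg r).intervalIntegrable 0 π)
    (by
      have : Continuous fun x => -(Real.cos x) * (g x * Real.exp (-(r * Real.cos x)) * Real.sin x ^ (n - 1)) := by fun_prop
      exact this.aestronglyMeasurable)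
    (Filter.Eventually.of_forall fun x _ => by
      intro s hs
      have h1 : |(-(Real.cos x)) * (g x * Real.exp (-(s * Real.cos x)) * Real.sin x ^ (n - 1))|
          ≤ Real.exp (-(s * Real.cos x)) := by
        rw [abs_mul, abs_mul, abs_mul]
        have hc : |(-(Real.cos x))| ≤ 1 := by rw [abs_neg]; exact Real.abs_cos_le_one x
        have hs' : |Real.sin x ^ (n-1)| ≤ 1 := by
          rw [abs_pow]; exact pow_le_one₀ (abs_nonneg _) (Real.abs_sin_le_one x)
        have he : |Real.exp (-(s * Real.cos x))| = Real.exp (-(s * Real.cos x)) :=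
          abs_of_pos (Real.exp_pos _)
        rw [he]
        calc |(-Real.cos x)| * (|g x| * Real.exp (-(s * Real.cos x)) * |Real.sin x ^ (n-1)|)
            ≤ 1 * (1 * Real.exp (-(s * Real.cos x)) * 1) := by
              gcongr <;> first | exact hc | exact hg1 x | exact hs' | positivity
          _ = Real.exp (-(s * Real.cos x)) := by ring
      refine h1.trans ?_
      apply Real.exp_le_exp.2
      have hsd : |s - r| < 1 := by
        have := Metric.mem_ball.1 hs; rwa [Real.dist_eq] at this
      have h2 : |(-(s * Real.cos x))| ≤ |s| := by
        rw [abs_neg, abs_mul]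
        nlinarith [Real.abs_cos_le_one x, abs_nonneg s]
      have h3 : |s| ≤ |r| + 1 := by
        have := abs_sub_abs_le_abs_sub s r
        linarith
      linarith [le_abs_self (-(s * Real.cos x))])
    (by apply Continuous.intervalIntegrable; fun_prop)
    (Filter.Eventually.of_forall fun x _ => by
      intro s hs
      have h : HasDerivAt (fun s : ℝ => Real.exp (-(s * Real.cos x)))
          (-(Real.cos x) * Real.exp (-(s * Real.cos x))) s := by
        have h0 : HasDerivAt (fun s : ℝ => -(s * Real.cos x)) (-(Real.cos x)) s :=
          (hasDerivAt_mul_const (Real.cos x)).neg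
        have := h0.exp
        convert this using 1
        ring
      have := (h.const_mul (g x)).mul_const (Real.sin x ^ (n - 1))
      exact this.congr_deriv (by ring))
  have h2 := key.2
  have : SA n (fun x => Real.cos x * g x) r =
      -∫ x in (0:ℝ)..π, -(Real.cos x) * (g x * Real.exp (-(r * Real.cos x)) * Real.sin x ^ (n - 1)) := by
    rw [← intervalIntegral.integral_neg]
    apply intervalIntegral.integral_congr
    intro x _
    ring
  rw [this, neg_neg]
  exact h2
noncomputable def SS (n k : ℕ) (r : ℝ) : ℝ :=
  ∫ x in (0:ℝ)..(π/2), Real.cos x ^ k * Real.sinh (r * Real.cos x) * Real.sin x ^ (n - 1)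

noncomputable def CC (n k : ℕ) (r : ℝ) : ℝ :=
  ∫ x in (0:ℝ)..(π/2), Real.cos x ^ k * Real.cosh (r * Real.cos x) * Real.sin x ^ (n - 1)

lemma SA_reflect (n k : ℕ) (r : ℝ) :
    SA n (fun x => Real.cos x ^ k) r =
      ∫ x in (0:ℝ)..(π/2), Real.cos x ^ k *
        (Real.exp (-(r * Real.cos x)) + (-1:ℝ)^k * Real.exp (r * Real.cos x)) *
        Real.sin x ^ (n - 1) := by
  have hcont : Continuous fun x => Real.cos x ^ k * Real.exp (-(r * Real.cos x)) *
      Real.sin x ^ (n - 1) := by fun_prop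
  have hsplit : SA n (fun x => Real.cos x ^ k) r =
      (∫ x in (0:ℝ)..(π/2), Real.cos x ^ k * Real.exp (-(r * Real.cos x)) * Real.sin x ^ (n-1))
      + ∫ x in (π/2:ℝ)..π, Real.cos x ^ k * Real.exp (-(r * Real.cos x)) * Real.sin x ^ (n-1) := by
    unfold SA
    rw [intervalIntegral.integral_add_adjacent_intervals (hcont.intervalIntegrable _ _)
      (hcont.intervalIntegrable _ _)]
  have hrefl : (∫ x in (π/2:ℝ)..π, Real.cos x ^ k * Real.exp (-(r * Real.cos x)) * Real.sin x ^ (n-1))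
      = ∫ x in (0:ℝ)..(π/2), (-1:ℝ)^k * (Real.cos x ^ k * Real.exp (r * Real.cos x) * Real.sin x ^ (n-1)) := by
    have h := intervalIntegral.integral_comp_sub_left
      (a := (0:ℝ)) (b := π/2)
      (fun x => Real.cos x ^ k * Real.exp (-(r * Real.cos x)) * Real.sin x ^ (n-1)) π
    have hb : π - π/2 = π/2 := by ring
    have ha : π - 0 = π := by ring
    rw [hb, ha] at h
    rw [← h]
    apply intervalIntegral.integral_congr
    intro x _
    simp only [Real.cos_pi_sub, Real.sin_pi_sub]
    rw [neg_eq_neg_one_mul (Real.cos x), mul_pow]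
    ring_nf
  rw [hsplit, hrefl, ← intervalIntegral.integral_add (hcont.intervalIntegrable _ _)
    ((by fun_prop : Continuous fun x => (-1:ℝ)^k * (Real.cos x ^ k * Real.exp (r * Real.cos x) * Real.sin x ^ (n-1))).intervalIntegrable _ _)]
  apply intervalIntegral.integral_congr
  intro x _
  ring

lemma SA_even (n : ℕ) (k : ℕ) (hk : Even k) (r : ℝ) :
    SA n (fun x => Real.cos x ^ k) r = 2 * CC n k r := by
  rw [SA_reflect, hk.neg_one_pow]
  unfold CC
  rw [← intervalIntegral.integral_const_mul]
  apply intervalIntegral.integral_congr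
  intro x _
  simp only [Real.cosh_eq]
  ring

lemma SA_odd (n : ℕ) (k : ℕ) (hk : Odd k) (r : ℝ) :
    SA n (fun x => Real.cos x ^ k) r = -(2 * SS n k r) := by
  rw [SA_reflect, hk.neg_one_pow]
  unfold SS
  rw [← intervalIntegral.integral_const_mul, ← intervalIntegral.integral_neg]
  apply intervalIntegral.integral_congr
  intro x _
  simp only [Real.sinh_eq]
  ring

lemma mul_sinh_nonneg {r : ℝ} (hr : 0 ≤ r) (t : ℝ) : 0 ≤ t * Real.sinh (r * t) := by
  rcases le_or_gt 0 t with ht | ht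
  · exact mul_nonneg ht (Real.sinh_nonneg_iff.2 (mul_nonneg hr ht))
  · have h1 : r * t ≤ 0 := mul_nonpos_of_nonneg_of_nonpos hr ht.le
    have h2 : Real.sinh (r * t) ≤ 0 := by
      rw [← Real.sinh_zero]
      exact Real.sinh_le_sinh.2 h1
    nlinarith

lemma mul_sinh_pos {r : ℝ} (hr : 0 < r) {t : ℝ} (ht : t ≠ 0) : 0 < t * Real.sinh (r * t) := by
  rcases lt_or_gt_of_ne ht with ht' | ht'
  · have h2 : Real.sinh (r * t) < 0 := by
      rw [← Real.sinh_zero]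
      exact Real.sinh_lt_sinh.2 (mul_neg_of_pos_of_neg hr ht')
    exact mul_pos_of_neg_of_neg ht' h2
  · exact mul_pos ht' (Real.sinh_pos_iff.2 (mul_pos hr ht'))

lemma key_identity (r c d : ℝ) :
    (c^2 - d^2) * (c * Real.sinh (r*c) * Real.cosh (r*d) - d * Real.sinh (r*d) * Real.cosh (r*c))
    = ((c-d)^2 * ((c+d) * Real.sinh (r*(c+d))) + (c+d)^2 * ((c-d) * Real.sinh (r*(c-d)))) / 2 := by
  rw [mul_add r c d, mul_sub r c d, Real.sinh_add, Real.sinh_sub]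
  ring

lemma key_nonneg {r : ℝ} (hr : 0 ≤ r) (c d : ℝ) :
    0 ≤ (c^2 - d^2) * (c * Real.sinh (r*c) * Real.cosh (r*d) - d * Real.sinh (r*d) * Real.cosh (r*c)) := by
  rw [key_identity]
  have h1 := mul_sinh_nonneg hr (c+d)
  have h2 := mul_sinh_nonneg hr (c-d)
  have := sq_nonneg (c-d)
  have := sq_nonneg (c+d)
  positivity

lemma key_pos {r : ℝ} (hr : 0 < r) {c d : ℝ} (h1 : c - d ≠ 0) (h2 : c + d ≠ 0) :
    0 < (c^2 - d^2) * (c * Real.sinh (r*c) * Real.cosh (r*d) - d * Real.sinh (r*d) * Real.cosh (r*c)) := by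
  rw [key_identity]
  have ha := mul_sinh_pos hr h2
  have hb := mul_sinh_pos hr h1
  have hc : (0:ℝ) < (c-d)^2 := by positivity
  have hd : (0:ℝ) < (c+d)^2 := by positivity
  have := mul_sinh_nonneg hr.le (c+d)
  nlinarith

noncomputable def DD (n : ℕ) (r x y : ℝ) : ℝ :=
  (Real.cos x^2 - Real.cos y^2) *
    (Real.cos x * Real.sinh (r*Real.cos x) * Real.cosh (r * Real.cos y)
      - Real.cos y * Real.sinh (r * Real.cos y) * Real.cosh (r * Real.cos x)) *
    Real.sin x ^ (n-1) * Real.sin y ^ (n-1)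

lemma DD_cont (n : ℕ) (r : ℝ) : Continuous (Function.uncurry (DD n r)) := by
  unfold DD Function.uncurry
  fun_prop

lemma DD_integral (n : ℕ) (r : ℝ) :
    (∫ x in (0:ℝ)..(π/2), ∫ y in (0:ℝ)..(π/2), DD n r x y)
      = 2 * (SS n 3 r * CC n 0 r - CC n 2 r * SS n 1 r) := by
  have c1 : ∀ k, Continuous fun y => Real.cos y ^ k * Real.sinh (r * Real.cos y) * Real.sin y ^ (n-1) := by
    intro k; fun_prop
  have c2 : ∀ k, Continuous fun y => Real.cos y ^ k * Real.cosh (r * Real.cos y) * Real.sin y ^ (n-1) := by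
    intro k; fun_prop
  have inner : ∀ x : ℝ, (∫ y in (0:ℝ)..(π/2), DD n r x y) =
      (Real.cos x^3 * Real.sinh (r*Real.cos x) * Real.sin x ^ (n-1)) * CC n 0 r
      - (Real.cos x^2 * Real.cosh (r*Real.cos x) * Real.sin x ^ (n-1)) * SS n 1 r
      - (Real.cos x * Real.sinh (r*Real.cos x) * Real.sin x ^ (n-1)) * CC n 2 r
      + (Real.cosh (r*Real.cos x) * Real.sin x ^ (n-1)) * SS n 3 r := by
    intro x
    have step1 : (∫ y in (0:ℝ)..(π/2), DD n r x y) =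
        ∫ y in (0:ℝ)..(π/2),
          ((Real.cos x^3 * Real.sinh (r*Real.cos x) * Real.sin x ^ (n-1)) *
            (Real.cos y ^ 0 * Real.cosh (r * Real.cos y) * Real.sin y ^ (n-1))
          - (Real.cos x^2 * Real.cosh (r*Real.cos x) * Real.sin x ^ (n-1)) *
            (Real.cos y ^ 1 * Real.sinh (r * Real.cos y) * Real.sin y ^ (n-1))
          - (Real.cos x * Real.sinh (r*Real.cos x) * Real.sin x ^ (n-1)) *
            (Real.cos y ^ 2 * Real.cosh (r * Real.cos y) * Real.sin y ^ (n-1))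
          + (Real.cosh (r*Real.cos x) * Real.sin x ^ (n-1)) *
            (Real.cos y ^ 3 * Real.sinh (r * Real.cos y) * Real.sin y ^ (n-1))) := by
      apply intervalIntegral.integral_congr
      intro y _
      unfold DD
      ring
    rw [step1]
    rw [intervalIntegral.integral_add (by apply Continuous.intervalIntegrable; fun_prop)
        (by apply Continuous.intervalIntegrable; fun_prop),
      intervalIntegral.integral_sub (by apply Continuous.intervalIntegrable; fun_prop)
        (by apply Continuous.intervalIntegrable; fun_prop),
      intervalIntegral.integral_sub (by apply Continuous.intervalIntegrable; fun_prop)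
        (by apply Continuous.intervalIntegrable; fun_prop)]
    rw [intervalIntegral.integral_const_mul, intervalIntegral.integral_const_mul,
      intervalIntegral.integral_const_mul, intervalIntegral.integral_const_mul]
    rfl
  rw [intervalIntegral.integral_congr (g := fun x =>
      (Real.cos x^3 * Real.sinh (r*Real.cos x) * Real.sin x ^ (n-1)) * CC n 0 r
      - (Real.cos x^2 * Real.cosh (r*Real.cos x) * Real.sin x ^ (n-1)) * SS n 1 r
      - (Real.cos x * Real.sinh (r*Real.cos x) * Real.sin x ^ (n-1)) * CC n 2 r
      + (Real.cosh (r*Real.cos x) * Real.sin x ^ (n-1)) * SS n 3 r) (fun x _ => inner x)]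
  rw [intervalIntegral.integral_add (by apply Continuous.intervalIntegrable; fun_prop)
      (by apply Continuous.intervalIntegrable; fun_prop),
    intervalIntegral.integral_sub (by apply Continuous.intervalIntegrable; fun_prop)
      (by apply Continuous.intervalIntegrable; fun_prop),
    intervalIntegral.integral_sub (by apply Continuous.intervalIntegrable; fun_prop)
      (by apply Continuous.intervalIntegrable; fun_prop)]
  rw [intervalIntegral.integral_mul_const, intervalIntegral.integral_mul_const,
    intervalIntegral.integral_mul_const, intervalIntegral.integral_mul_const]
  have e1 : (∫ x in (0:ℝ)..(π/2), Real.cos x^3 * Real.sinh (r*Real.cos x) * Real.sin x ^ (n-1)) = SS n 3 r := rfl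
  have e2 : (∫ x in (0:ℝ)..(π/2), Real.cos x^2 * Real.cosh (r*Real.cos x) * Real.sin x ^ (n-1)) = CC n 2 r := rfl
  have e3 : (∫ x in (0:ℝ)..(π/2), Real.cos x * Real.sinh (r*Real.cos x) * Real.sin x ^ (n-1)) = SS n 1 r := by
    unfold SS
    apply intervalIntegral.integral_congr
    intro x _
    ring
  have e4 : (∫ x in (0:ℝ)..(π/2), Real.cosh (r*Real.cos x) * Real.sin x ^ (n-1)) = CC n 0 r := by
    unfold CC
    apply intervalIntegral.integral_congr
    intro x _
    ring
  rw [e1, e2, e3, e4]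
  ring

lemma DD_nonneg (n : ℕ) {r : ℝ} (hr : 0 ≤ r) {x y : ℝ} (hx : x ∈ Set.Icc 0 (π/2))
    (hy : y ∈ Set.Icc 0 (π/2)) : 0 ≤ DD n r x y := by
  unfold DD
  have hsx : 0 ≤ Real.sin x := Real.sin_nonneg_of_nonneg_of_le_pi hx.1
    (hx.2.trans (by linarith [Real.pi_pos]))
  have hsy : 0 ≤ Real.sin y := Real.sin_nonneg_of_nonneg_of_le_pi hy.1
    (hy.2.trans (by linarith [Real.pi_pos]))
  have hk := key_nonneg hr (Real.cos x) (Real.cos y)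
  have h1 : (0:ℝ) ≤ Real.sin x ^ (n-1) := pow_nonneg hsx _
  have h2 : (0:ℝ) ≤ Real.sin y ^ (n-1) := pow_nonneg hsy _
  calc (0:ℝ) ≤ ((Real.cos x^2 - Real.cos y^2) *
      (Real.cos x * Real.sinh (r*Real.cos x) * Real.cosh (r * Real.cos y)
        - Real.cos y * Real.sinh (r * Real.cos y) * Real.cosh (r * Real.cos x)))
      * Real.sin x ^ (n-1) * Real.sin y ^ (n-1) := by positivity
    _ = _ := by ring

lemma sqrt_three_gt_one : (1:ℝ) < Real.sqrt 3 := by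
  rw [show (1:ℝ) = Real.sqrt 1 from (Real.sqrt_one).symm]
  exact Real.sqrt_lt_sqrt (by norm_num) (by norm_num)

lemma DD_pt_pos (n : ℕ) {r : ℝ} (hr : 0 < r) : 0 < DD n r (π/3) (π/6) := by
  unfold DD
  rw [Real.cos_pi_div_three, Real.cos_pi_div_six, Real.sin_pi_div_three, Real.sin_pi_div_six]
  have h3 := sqrt_three_gt_one
  have h0 : (0:ℝ) < Real.sqrt 3 := by linarith
  have hc1 : (1:ℝ)/2 - Real.sqrt 3 / 2 ≠ 0 := by intro h; nlinarith
  have hc2 : (1:ℝ)/2 + Real.sqrt 3 / 2 ≠ 0 := by positivity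
  have hk := key_pos hr hc1 hc2
  have h1 : (0:ℝ) < (Real.sqrt 3 / 2) ^ (n-1) := by positivity
  have h2 : (0:ℝ) < (1/2 : ℝ) ^ (n-1) := by positivity
  calc (0:ℝ) < (((1/2:ℝ)^2 - (Real.sqrt 3/2)^2) *
      ((1/2:ℝ) * Real.sinh (r*(1/2)) * Real.cosh (r * (Real.sqrt 3/2))
        - (Real.sqrt 3/2) * Real.sinh (r * (Real.sqrt 3/2)) * Real.cosh (r * (1/2))))
      * (Real.sqrt 3/2) ^ (n-1) * (1/2:ℝ) ^ (n-1) := by positivity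
    _ = _ := by ring

lemma DD_double_pos (n : ℕ) {r : ℝ} (hr : 0 < r) :
    0 < ∫ x in (0:ℝ)..(π/2), ∫ y in (0:ℝ)..(π/2), DD n r x y := by
  have hπ6 : (0:ℝ) < π/6 := by linarith [Real.pi_pos]
  have hπ : (0:ℝ) < π/2 := by linarith [Real.pi_pos]
  apply my_integral_pos (z := π/3)
  · exact intervalIntegral.continuous_parametric_intervalIntegral_of_continuous' (DD_cont n r) 0 (π/2)
  · exact hπ
  · intro x hx
    apply intervalIntegral.integral_nonneg (by linarith [Real.pi_pos])
    intro y hy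
    exact DD_nonneg n hr.le hx hy
  · constructor <;> [linarith [Real.pi_pos]; linarith [Real.pi_pos]]
  · apply my_integral_pos (z := π/6)
    · have : Continuous fun y => DD n r (π/3) y := by unfold DD; fun_prop
      exact this
    · exact hπ
    · intro y hy
      exact DD_nonneg n hr.le ⟨by linarith [Real.pi_pos], by linarith [Real.pi_pos]⟩ hy
    · constructor <;> [linarith [Real.pi_pos]; linarith [Real.pi_pos]]
    · exact DD_pt_pos n hr

lemma N_pos (n : ℕ) {r : ℝ} (hr : 0 < r) :
    0 < (-(SA n (fun x => Real.cos x ^ 3) r)) * SA n (fun _ => 1) r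
        - SA n (fun x => Real.cos x ^ 2) r * (-(SA n Real.cos r)) := by
  have h1 : SA n (fun _ => (1:ℝ)) r = 2 * CC n 0 r := by
    rw [SA_congr (h := fun x => Real.cos x ^ 0) (fun x => (pow_zero _).symm) r]
    exact SA_even n 0 Even.zero r
  have h2 : SA n Real.cos r = -(2 * SS n 1 r) := by
    rw [SA_congr (h := fun x => Real.cos x ^ 1) (fun x => (pow_one _).symm) r]
    exact SA_odd n 1 odd_one r
  have h3 : SA n (fun x => Real.cos x ^ 2) r = 2 * CC n 2 r := SA_even n 2 (by decide) r
  have h4 : SA n (fun x => Real.cos x ^ 3) r = -(2 * SS n 3 r) := SA_odd n 3 (by decide) r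
  rw [h1, h2, h3, h4]
  have := DD_double_pos n hr
  rw [DD_integral n r] at this
  nlinarith

/-- `r ↦ ρ(r)/r` is strictly decreasing on `(0,∞)`; equivalently
`r ↦ H''(r)/H(r)` is strictly increasing, and `0 < ρ'(r) < ρ(r)/r` for all `r > 0`,
where `ρ = H'/H`. -/
theorem stmt12 (n : ℕ) (hn : 1 ≤ n) (H H1 H2 ρ : ℝ → ℝ)
    (hH : ∀ r, H r = ∫ x in (0:ℝ)..π, Real.exp (-(r * Real.cos x)) * (Real.sin x) ^ (n - 1))
    (hH1 : ∀ r, H1 r =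
      -∫ x in (0:ℝ)..π, Real.cos x * Real.exp (-(r * Real.cos x)) * (Real.sin x) ^ (n - 1))
    (hH2 : ∀ r, H2 r =
      ∫ x in (0:ℝ)..π, (Real.cos x) ^ 2 * Real.exp (-(r * Real.cos x)) * (Real.sin x) ^ (n - 1))
    (hρ : ∀ r, ρ r = H1 r / H r) :
    StrictAntiOn (fun r => ρ r / r) (Set.Ioi 0) ∧
    StrictMonoOn (fun r => H2 r / H r) (Set.Ioi 0) ∧
    ∀ r : ℝ, 0 < r → 0 < deriv ρ r ∧ deriv ρ r < ρ r / r := by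
  have hone : ∀ r, H r = SA n (fun _ => 1) r := by
    intro r
    rw [hH]
    unfold SA
    apply intervalIntegral.integral_congr
    intro x _
    simp only [one_mul]
  have hH1SA : ∀ r, H1 r = -(SA n Real.cos r) := fun r => hH1 r
  have hH2SA : ∀ r, H2 r = SA n (fun x => Real.cos x ^ 2) r := fun r => hH2 r
  have hapos : ∀ r, 0 < H r := fun r => (hone r) ▸ SA_one_pos n r
  have dH : ∀ r, HasDerivAt H (H1 r) r := by
    intro r
    have h := SA_deriv n (g := fun _ => (1:ℝ)) continuous_const (fun x => by norm_num) r
    have e1 : -SA n (fun x => Real.cos x * 1) r = H1 r := by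
      rw [SA_congr (h := Real.cos) (fun x => mul_one _) r]
      exact (hH1SA r).symm
    rw [e1] at h
    have e2 : SA n (fun _ => (1:ℝ)) = H := funext fun s => (hone s).symm
    exact e2 ▸ h
  have dH1 : ∀ r, HasDerivAt H1 (H2 r) r := by
    intro r
    have h := (SA_deriv n (g := Real.cos) Real.continuous_cos
      (fun x => Real.abs_cos_le_one x) r).neg
    rw [neg_neg] at h
    have e1 : SA n (fun x => Real.cos x * Real.cos x) r = H2 r := by
      rw [SA_congr (h := fun x => Real.cos x ^ 2) (fun x => (pow_two _).symm) r]
      exact (hH2SA r).symm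
    rw [e1] at h
    have e2 : (fun s => -SA n Real.cos s) = H1 := funext fun s => (hH1SA s).symm
    exact e2 ▸ h
  have dH2 : ∀ r, HasDerivAt H2 (-(SA n (fun x => Real.cos x ^ 3) r)) r := by
    intro r
    have h := SA_deriv n (g := fun x => Real.cos x ^ 2) (by fun_prop)
      (fun x => by
        rw [abs_pow]
        exact pow_le_one₀ (abs_nonneg _) (Real.abs_cos_le_one x)) r
    have e1 : SA n (fun x => Real.cos x * Real.cos x ^ 2) r
        = SA n (fun x => Real.cos x ^ 3) r :=
      SA_congr (fun x => by ring) r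
    rw [e1] at h
    have e2 : SA n (fun x => Real.cos x ^ 2) = H2 := funext fun s => (hH2SA s).symm
    exact e2 ▸ h
  have hVpos : ∀ r, 0 < H2 r * H r - H1 r * H1 r := by
    intro r
    have h := SA_var_pos n r
    rw [hH2SA r, hone r, hH1SA r]
    nlinarith [h]
  have hibpH : ∀ r, (n:ℝ) * H1 r = r * (H r - H2 r) := by
    intro r
    have h := SA_ibp hn r
    have hsp : SA n (fun x => 1 - Real.cos x ^ 2) r
        = SA n (fun _ => 1) r - SA n (fun x => Real.cos x ^ 2) r := by
      have h1 := SA_add (n := n) (g := fun x => 1 - Real.cos x ^ 2)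
        (h := fun x => Real.cos x ^ 2) (by fun_prop) (by fun_prop) r
      have h2 : SA n (fun x => (1 - Real.cos x ^ 2) + Real.cos x ^ 2) r
          = SA n (fun _ => 1) r := SA_congr (fun x => by ring) r
      linarith [h1, h2]
    rw [hH1SA r, hone r, hH2SA r]
    linear_combination -h + r * hsp
  have hNposH : ∀ r, 0 < r → 0 < (-(SA n (fun x => Real.cos x ^ 3) r)) * H r - H2 r * H1 r := by
    intro r hr
    rw [hone r, hH2SA r, hH1SA r]
    exact N_pos n hr
  have hρder : ∀ r, HasDerivAt ρ ((H2 r * H r - H1 r * H1 r) / (H r) ^ 2) r := by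
    intro r
    have hfun : ρ = fun s => H1 s / H s := funext hρ
    rw [hfun]
    exact (dH1 r).div (dH r) (hapos r).ne'
  have key3 : ∀ r, 0 < r →
      (H2 r * H r - H1 r * H1 r) / (H r) ^ 2 * r < H1 r / H r := by
    intro r hr
    have f1 : (n:ℝ) * H1 r = r * (H r - H2 r) := hibpH r
    have f2 : (n:ℝ) * H2 r = (H r - H2 r) + r * (H1 r - (-(SA n (fun x => Real.cos x ^ 3) r))) := by
      have d1 : HasDerivAt (fun s => (n:ℝ) * H1 s) ((n:ℝ) * H2 r) r := (dH1 r).const_mul _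
      have d2 : HasDerivAt (fun s => s * (H s - H2 s))
          (1 * (H r - H2 r) + r * (H1 r - (-(SA n (fun x => Real.cos x ^ 3) r)))) r :=
        (hasDerivAt_id r).mul ((dH r).sub (dH2 r))
      have hfe : (fun s => (n:ℝ) * H1 s) = (fun s => s * (H s - H2 s)) :=
        funext fun s => hibpH s
      rw [hfe] at d1
      have huniq := d1.unique d2
      linear_combination huniq
    have f3 : 0 < (-(SA n (fun x => Real.cos x ^ 3) r)) * H r - H2 r * H1 r := hNposH r hr
    have hn0 : (0:ℝ) < (n:ℝ) := by
      have : 0 < n := hn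
      exact_mod_cast this
    have hgoal' : 0 < H1 r * H r - r * (H2 r * H r - H1 r * H1 r) := by
      have hident : (n:ℝ) * (H1 r * H r - r * (H2 r * H r - H1 r * H1 r))
          = r ^ 2 * ((-(SA n (fun x => Real.cos x ^ 3) r)) * H r - H2 r * H1 r) := by
        linear_combination (H r + r * H1 r) * f1 - r * H r * f2
      nlinarith [mul_pos (mul_pos hr hr) f3]
    rw [div_mul_eq_mul_div, div_lt_div_iff₀ (pow_pos (hapos r) 2) (hapos r)]
    nlinarith [mul_pos hgoal' (hapos r)]
  refine ⟨?_, ?_, ?_⟩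
  · have duu : ∀ r : ℝ, r ≠ 0 → HasDerivAt (fun s => ρ s / s)
        (((H2 r * H r - H1 r * H1 r) / (H r) ^ 2 * r - ρ r * 1) / r ^ 2) r := by
      intro r hr
      exact (hρder r).div (hasDerivAt_id r) hr
    apply strictAntiOn_of_deriv_neg (convex_Ioi 0)
    · intro x hx
      exact ((duu x (ne_of_gt hx)).continuousAt).continuousWithinAt
    · intro x hx
      rw [interior_Ioi] at hx
      rw [(duu x (ne_of_gt hx)).deriv]
      apply div_neg_of_neg_of_pos
      · have h := key3 x hx
        rw [hρ x]
        linarith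
      · exact pow_pos hx 2
  · have dG : ∀ x : ℝ, HasDerivAt (fun r => H2 r / H r)
        (((-(SA n (fun y => Real.cos y ^ 3) x)) * H x - H2 x * H1 x) / (H x) ^ 2) x :=
      fun x => (dH2 x).div (dH x) (hapos x).ne'
    apply strictMonoOn_of_deriv_pos (convex_Ioi 0)
    · intro x _
      exact (dG x).continuousAt.continuousWithinAt
    · intro x hx
      rw [interior_Ioi] at hx
      rw [(dG x).deriv]
      exact div_pos (hNposH x hx) (pow_pos (hapos x) 2)
  · intro r hr
    constructor
    · rw [(hρder r).deriv]
      exact div_pos (hVpos r) (pow_pos (hapos r) 2)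
    · rw [(hρder r).deriv, hρ r, lt_div_iff₀ hr]
      exact key3 r hr
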